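/- Let k ≥ 1, let m₁,…,m_{2k} be positive integers with m₁ ≥ 2, let G = Γ(m₁,…,m_{2k}) with Laplacian L, and for t ∈ ℝ let U_t = exp(−itL). Let i ≠ j be vertices with i ∈ B_p and j ∈ B_q where p ≤ q. Then |(U_t)_{i,j}| ≤ 2/σ_q for all t ∈ ℝ; in particular, if q ≥ 2 then |(U_t)_{i,j}| < 1. -/

import Mathlib

open Finset Matrix

/-- `sig m l = m 1 + ⋯ + m l` (block sizes `m` are indexed starting from 1). -/
def sig (m : ℕ → ℕ) (l : ℕ) : ℕ := ∑ i ∈ Finset.Icc 1 l, m i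

/-- The (1-based) index of the block containing the (0-based) vertex `v`:
`blk r m v = b` iff `sig m (b-1) ≤ v < sig m b`. -/
def blk (r : ℕ) (m : ℕ → ℕ) (v : ℕ) : ℕ :=
  1 + ((Finset.Icc 1 r).filter (fun l => sig m l ≤ v)).card

/-- `Γ(m₁,…,m_r) = ((((O_{m₁} ∨ K_{m₂}) ∪ O_{m₃}) ∨ K_{m₄}) ⋯ )`:
the odd-indexed blocks are added as sets of isolated vertices (disjoint union with `O_{m_l}`)
and the even-indexed blocks are cliques joined to everything already present.  Hence two
distinct vertices are adjacent iff the larger of their two block indices is even.  Vertices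
are labelled `0,…,n-1` (`n = m₁+⋯+m_r`), block `B₁` first, then `B₂`, etc. -/
def GammaEven (r : ℕ) (m : ℕ → ℕ) : SimpleGraph (Fin (sig m r)) where
  Adj u v := u ≠ v ∧ (max (blk r m (u : ℕ)) (blk r m (v : ℕ))) % 2 = 0
  symm := by
    constructor
    intro u v h
    exact ⟨h.1.symm, by rw [max_comm]; exact h.2⟩
  loopless := by constructor; intro u h; exact h.1 rfl

instance (r : ℕ) (m : ℕ → ℕ) : DecidableRel (GammaEven r m).Adj := fun u v =>
  decidable_of_iff (u ≠ v ∧ (max (blk r m (u : ℕ)) (blk r m (v : ℕ))) % 2 = 0) Iff.rfl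

/-- `U_t = exp(−itL)`, where `L` is the Laplacian matrix of `G` (diagonal entries the
degrees, entry `−1` for each edge, `0` otherwise). -/
noncomputable def Ut {n : ℕ} (G : SimpleGraph (Fin n)) [DecidableRel G.Adj] (t : ℝ) :
    Matrix (Fin n) (Fin n) ℂ :=
  NormedSpace.exp ((-(Complex.I * (t : ℂ))) • G.lapMatrix ℂ)

/-- The transfer probability `p_G(i,j,t) = |(U_t)_{j,i}|²`. -/
noncomputable def transferProb {n : ℕ} (G : SimpleGraph (Fin n)) [DecidableRel G.Adj]
    (i j : Fin n) (t : ℝ) : ℝ :=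
  ‖Ut G t j i‖ ^ 2

/-- `λ₀(j) = m_{j+1} + m_{j+3} + ⋯ + m_{2k}` (the indices run over `j+1, j+3, …`). -/
def lam0 (k : ℕ) (m : ℕ → ℕ) (j : ℕ) : ℕ :=
  ∑ l ∈ (Finset.Icc (j + 1) (2 * k)).filter (fun l => (l - j) % 2 = 1), m l

/-- `λ₁(j) = σ_j + m_{j+2} + m_{j+4} + ⋯ + m_{2k}` (the sum runs over `j+2, j+4, …`). -/
def lam1 (k : ℕ) (m : ℕ → ℕ) (j : ℕ) : ℕ :=
  sig m j + ∑ l ∈ (Finset.Icc (j + 2) (2 * k)).filter (fun l => (l - j) % 2 = 0), m l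

lemma sig_zero (m : ℕ → ℕ) : sig m 0 = 0 := by simp [sig]

lemma sig_succ (m : ℕ → ℕ) (l : ℕ) : sig m (l + 1) = sig m l + m (l + 1) := by
  unfold sig
  rw [Finset.sum_Icc_succ_top (by omega)]

lemma sig_mono (m : ℕ → ℕ) : Monotone (sig m) := by
  intro a b hab
  exact Finset.sum_le_sum_of_subset (Finset.Icc_subset_Icc_right hab)

lemma sig_pos (m : ℕ → ℕ) (hm1 : 1 ≤ m 1) {l : ℕ} (hl : 1 ≤ l) : 0 < sig m l := by
  have h1 : (1:ℕ) ∈ Finset.Icc 1 l := by simp [hl]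
  have := Finset.single_le_sum (f := m) (fun i _ => Nat.zero_le _) h1
  unfold sig
  omega

lemma blk_pos (r : ℕ) (m : ℕ → ℕ) (v : ℕ) : 1 ≤ blk r m v := Nat.le_add_right 1 _

lemma blk_le_iff (r : ℕ) (m : ℕ → ℕ) {v : ℕ} (hv : v < sig m r) {l : ℕ} (hl : l ≤ r) :
    blk r m v ≤ l ↔ v < sig m l := by
  constructor
  · intro h
    by_contra hs
    push_neg at hs
    have hsub : Finset.Icc 1 l ⊆ (Finset.Icc 1 r).filter (fun j => sig m j ≤ v) := by
      intro c hc
      simp only [Finset.mem_Icc, Finset.mem_filter] at hc ⊢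
      exact ⟨⟨hc.1, hc.2.trans hl⟩, le_trans (sig_mono m hc.2) hs⟩
    have := Finset.card_le_card hsub
    simp only [Nat.card_Icc] at this
    unfold blk at h
    omega
  · intro h
    match l with
    | 0 => exact absurd h (by simp [sig_zero])
    | l + 1 =>
      have hsub : (Finset.Icc 1 r).filter (fun j => sig m j ≤ v) ⊆ Finset.Icc 1 l := by
        intro c hc
        simp only [Finset.mem_Icc, Finset.mem_filter] at hc ⊢
        refine ⟨hc.1.1, ?_⟩
        by_contra hcl
        push_neg at hcl
        have h2 : sig m (l + 1) ≤ sig m c := sig_mono m hcl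
        have h3 : sig m c ≤ v := hc.2
        omega
      have := Finset.card_le_card hsub
      simp only [Nat.card_Icc] at this
      unfold blk
      omega

lemma blk_le (r : ℕ) (m : ℕ → ℕ) {v : ℕ} (hv : v < sig m r) : blk r m v ≤ r :=
  (blk_le_iff r m hv le_rfl).2 hv

lemma blk_strip (r : ℕ) (m : ℕ → ℕ) {v l : ℕ} (h1 : sig m l ≤ v) (h2 : v < sig m (l + 1))
    (hlr : l + 1 ≤ r) : blk r m v = l + 1 := by
  have hv : v < sig m r := lt_of_lt_of_le h2 (sig_mono m hlr)
  have ha : blk r m v ≤ l + 1 := (blk_le_iff r m hv hlr).2 h2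
  have hb : ¬ blk r m v ≤ l := by
    intro h
    exact absurd ((blk_le_iff r m hv (by omega)).1 h) (by omega)
  omega


/-- `Tf m r b l = ∑_{1 ≤ c ≤ l, max b c even} m c` (sum represented over `Icc 1 r`). -/
def Tf (m : ℕ → ℕ) (r b l : ℕ) : ℕ :=
  ∑ c ∈ Finset.Icc 1 r, if c ≤ l ∧ max b c % 2 = 0 then m c else 0

/-- `Ef m r l = ∑_{l+1 ≤ c ≤ r, c even} m c`. -/
def Ef (m : ℕ → ℕ) (r l : ℕ) : ℕ :=
  ∑ c ∈ Finset.Icc 1 r, if l + 1 ≤ c ∧ c % 2 = 0 then m c else 0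

lemma Tf_succ (m : ℕ → ℕ) (r b l : ℕ) (hlr : l + 1 ≤ r) :
    Tf m r b (l + 1) = Tf m r b l + (if max b (l + 1) % 2 = 0 then m (l + 1) else 0) := by
  unfold Tf
  have h1 : ∀ c ∈ Finset.Icc 1 r,
      (if c ≤ l + 1 ∧ max b c % 2 = 0 then m c else 0)
        = (if c ≤ l ∧ max b c % 2 = 0 then m c else 0)
          + (if c = l + 1 then (if max b c % 2 = 0 then m c else 0) else 0) := by
    intro c _
    split_ifs <;> omega
  rw [Finset.sum_congr rfl h1, Finset.sum_add_distrib,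
    Finset.sum_ite_eq' (Finset.Icc 1 r) (l + 1) (fun c => if max b c % 2 = 0 then m c else 0)]
  rw [if_pos (by simp [Finset.mem_Icc]; omega)]

lemma Tf_top (m : ℕ → ℕ) (r b l : ℕ) (hbl : b ≤ l) :
    Tf m r b r = Tf m r b l + Ef m r l := by
  unfold Tf Ef
  rw [← Finset.sum_add_distrib]
  refine Finset.sum_congr rfl fun c hc => ?_
  simp only [Finset.mem_Icc] at hc
  split_ifs <;> omega

lemma Tf_small (m : ℕ → ℕ) (r b l : ℕ) (hlb : l < b) (hlr : l ≤ r) :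
    Tf m r b l = if b % 2 = 0 then sig m l else 0 := by
  unfold Tf
  have h1 : ∀ c ∈ Finset.Icc 1 r,
      (if c ≤ l ∧ max b c % 2 = 0 then m c else 0)
        = (if b % 2 = 0 then (if c ≤ l then m c else 0) else 0) := by
    intro c hc
    split_ifs <;> omega
  rw [Finset.sum_congr rfl h1]
  split_ifs with hb
  · rw [← Finset.sum_filter]
    unfold sig
    congr 1
    ext c
    simp only [Finset.mem_filter, Finset.mem_Icc]
    omega
  · simp

lemma Tf_diag (m : ℕ → ℕ) (r b : ℕ) (hbr : b ≤ r) :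
    Tf m r b b = if b % 2 = 0 then sig m b else 0 := by
  unfold Tf
  have h1 : ∀ c ∈ Finset.Icc 1 r,
      (if c ≤ b ∧ max b c % 2 = 0 then m c else 0)
        = (if b % 2 = 0 then (if c ≤ b then m c else 0) else 0) := by
    intro c hc
    split_ifs <;> omega
  rw [Finset.sum_congr rfl h1]
  split_ifs with hb
  · rw [← Finset.sum_filter]
    unfold sig
    congr 1
    ext c
    simp only [Finset.mem_filter, Finset.mem_Icc]
    omega
  · simp

lemma Ef_succ (m : ℕ → ℕ) (r l : ℕ) (hlr : l + 1 ≤ r) :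
    Ef m r l = (if (l + 1) % 2 = 0 then m (l + 1) else 0) + Ef m r (l + 1) := by
  unfold Ef
  have h1 : ∀ c ∈ Finset.Icc 1 r,
      (if l + 1 ≤ c ∧ c % 2 = 0 then m c else 0)
        = (if c = l + 1 then (if c % 2 = 0 then m c else 0) else 0)
          + (if l + 2 ≤ c ∧ c % 2 = 0 then m c else 0) := by
    intro c _
    split_ifs <;> omega
  rw [Finset.sum_congr rfl h1, Finset.sum_add_distrib,
    Finset.sum_ite_eq' (Finset.Icc 1 r) (l + 1) (fun c => if c % 2 = 0 then m c else 0)]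
  rw [if_pos (by simp [Finset.mem_Icc]; omega)]

lemma sum_blk (m : ℕ → ℕ) (r : ℕ) (f : ℕ → ℂ) {l : ℕ} (hl : l ≤ r) :
    (∑ v : Fin (sig m r), (if (v : ℕ) < sig m l then f (blk r m (v : ℕ)) else 0))
      = ∑ c ∈ Finset.Icc 1 r, (if c ≤ l then (m c : ℂ) * f c else 0) := by
  rw [Fin.sum_univ_eq_sum_range (fun x => if x < sig m l then f (blk r m x) else 0) (sig m r)]
  have key : ∀ s, s ≤ sig m r →
      (∑ x ∈ Finset.range (sig m r), (if x < s then f (blk r m x) else 0))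
        = ∑ x ∈ Finset.range s, f (blk r m x) := by
    intro s hs
    rw [← Finset.sum_filter]
    congr 1
    ext x
    simp only [Finset.mem_filter, Finset.mem_range]
    omega
  induction l with
  | zero =>
    rw [sig_zero, key 0 (Nat.zero_le _)]
    rw [Finset.range_zero, Finset.sum_empty]
    symm
    refine Finset.sum_eq_zero fun c hc => ?_
    simp only [Finset.mem_Icc] at hc
    rw [if_neg (by omega)]
  | succ l ih =>
    have hlr : l ≤ r := by omega
    have h1 : sig m l ≤ sig m r := sig_mono m hlr
    have h2 : sig m (l + 1) ≤ sig m r := sig_mono m hl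
    have h3 : sig m l ≤ sig m (l + 1) := sig_mono m (by omega)
    rw [key _ h2]
    have ihs : (∑ x ∈ Finset.range (sig m l), f (blk r m x))
        = ∑ c ∈ Finset.Icc 1 r, (if c ≤ l then (m c : ℂ) * f c else 0) := by
      rw [← key _ h1]; exact ih hlr
    rw [Finset.range_eq_Ico, ← Finset.sum_Ico_consecutive _ (Nat.zero_le (sig m l)) h3]
    have hstrip : (∑ x ∈ Finset.Ico (sig m l) (sig m (l + 1)), f (blk r m x))
        = (m (l + 1) : ℂ) * f (l + 1) := by
      have hc : ∀ x ∈ Finset.Ico (sig m l) (sig m (l + 1)), f (blk r m x) = f (l + 1) := by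
        intro x hx
        rw [Finset.mem_Ico] at hx
        rw [blk_strip r m hx.1 hx.2 hl]
      rw [Finset.sum_congr rfl hc, Finset.sum_const, Nat.card_Ico, sig_succ]
      rw [Nat.add_sub_cancel_left, nsmul_eq_mul]
    rw [← Finset.range_eq_Ico, ihs, hstrip]
    have h4 : ∀ c ∈ Finset.Icc 1 r,
        (if c ≤ l + 1 then (m c : ℂ) * f c else 0)
          = (if c ≤ l then (m c : ℂ) * f c else 0)
            + (if c = l + 1 then (m c : ℂ) * f c else 0) := by
      intro c _
      split_ifs <;> first | omega | simp
    rw [Finset.sum_congr rfl h4, Finset.sum_add_distrib,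
      Finset.sum_ite_eq' (Finset.Icc 1 r) (l + 1) (fun c => (m c : ℂ) * f c)]
    rw [if_pos (by simp [Finset.mem_Icc]; omega)]

/-- indicator (as a complex vector) of the first `sig m l` vertices -/
def chi (r : ℕ) (m : ℕ → ℕ) (l : ℕ) : Fin (sig m r) → ℂ :=
  fun v => if (v : ℕ) < sig m l then 1 else 0


lemma chi_eq_ite (m : ℕ → ℕ) (r : ℕ) (u : Fin (sig m r)) {l : ℕ} (hl : l ≤ r) :
    chi r m l u = if blk r m (u : ℕ) ≤ l then (1 : ℂ) else 0 :=
  if_congr (blk_le_iff r m u.isLt hl).symm rfl rfl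

lemma adj_sum (m : ℕ → ℕ) (r : ℕ) (u : Fin (sig m r)) {l : ℕ} (hl : l ≤ r) :
    (∑ w ∈ (GammaEven r m).neighborFinset u, chi r m l w)
      = (Tf m r (blk r m (u : ℕ)) l : ℂ)
        - (if blk r m (u : ℕ) ≤ l ∧ blk r m (u : ℕ) % 2 = 0 then 1 else 0) := by
  rw [SimpleGraph.neighborFinset_eq_filter, Finset.sum_filter]
  have hpt : ∀ w : Fin (sig m r), (if (GammaEven r m).Adj u w then chi r m l w else 0)
      = (if (w : ℕ) < sig m l then
          (fun c => if max (blk r m (u : ℕ)) c % 2 = 0 then (1 : ℂ) else 0) (blk r m (w : ℕ))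
          else 0)
        - (if w = u then (if (u : ℕ) < sig m l ∧ blk r m (u : ℕ) % 2 = 0 then (1 : ℂ) else 0)
          else 0) := by
    intro w
    by_cases hw : w = u
    · subst hw
      rw [if_neg (SimpleGraph.irrefl _), if_pos rfl]
      simp only [max_self]
      split_ifs <;> simp_all
    · rw [if_neg hw, sub_zero]
      have hadj : (GammaEven r m).Adj u w ↔ (max (blk r m (u:ℕ)) (blk r m (w:ℕ))) % 2 = 0 :=
        ⟨fun h => h.2, fun h => ⟨fun he => hw (he.symm), h⟩⟩
      unfold chi
      split_ifs with h1 h2 h3 h4 h5 <;> simp_all [hadj]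
  rw [Finset.sum_congr rfl (fun w _ => hpt w), Finset.sum_sub_distrib]
  rw [sum_blk m r (fun c => if max (blk r m (u : ℕ)) c % 2 = 0 then (1 : ℂ) else 0) hl]
  rw [Finset.sum_ite_eq' Finset.univ u
    (fun _ => (if (u : ℕ) < sig m l ∧ blk r m (u : ℕ) % 2 = 0 then (1 : ℂ) else 0)),
    if_pos (Finset.mem_univ u)]
  congr 1
  · have : (Tf m r (blk r m (u : ℕ)) l : ℂ)
        = ∑ c ∈ Finset.Icc 1 r, (if c ≤ l ∧ max (blk r m (u:ℕ)) c % 2 = 0 then (m c : ℂ) else 0) := by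
      unfold Tf
      push_cast [apply_ite (Nat.cast : ℕ → ℂ)]
      rfl
    rw [this]
    refine Finset.sum_congr rfl fun c _ => ?_
    split_ifs <;> simp_all
  · congr 1
    rw [eq_iff_iff]
    have := blk_le_iff r m u.isLt hl
    tauto

lemma deg_eq (m : ℕ → ℕ) (r : ℕ) (u : Fin (sig m r)) :
    ((GammaEven r m).degree u : ℂ)
      = (Tf m r (blk r m (u : ℕ)) r : ℂ) - (if blk r m (u : ℕ) % 2 = 0 then 1 else 0) := by
  have h := adj_sum m r u (le_refl r)
  have h2 : (∑ w ∈ (GammaEven r m).neighborFinset u, chi r m r w)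
      = ∑ w ∈ (GammaEven r m).neighborFinset u, (1 : ℂ) :=
    Finset.sum_congr rfl fun w _ => by unfold chi; rw [if_pos w.isLt]
  rw [h2, Finset.sum_const, nsmul_eq_mul, mul_one] at h
  rw [SimpleGraph.degree, h]
  congr 1
  congr 1
  rw [eq_iff_iff]
  have := blk_le r m u.isLt
  tauto

lemma lap_chi (m : ℕ → ℕ) (r : ℕ) (u : Fin (sig m r)) {l : ℕ} (hl : l ≤ r) :
    ((GammaEven r m).lapMatrix ℂ *ᵥ chi r m l) u
      = (if blk r m (u : ℕ) ≤ l then (Tf m r (blk r m (u : ℕ)) r : ℂ) else 0)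
        - (Tf m r (blk r m (u : ℕ)) l : ℂ) := by
  rw [SimpleGraph.lapMatrix_mulVec_apply, adj_sum m r u hl, deg_eq m r u,
    chi_eq_ite m r u hl]
  by_cases h1 : blk r m (u : ℕ) ≤ l <;> by_cases h2 : blk r m (u : ℕ) % 2 = 0 <;>
    simp only [h1, h2, and_true, and_false, if_true, if_false, if_pos, if_neg,
      not_false_iff, and_self] <;> ring


lemma mulVec_comb {N : ℕ} (M : Matrix (Fin N) (Fin N) ℂ) (a b : ℂ) (x y : Fin N → ℂ)
    (u : Fin N) :
    (M *ᵥ fun v => a * x v - b * y v) u = a * (M *ᵥ x) u - b * (M *ᵥ y) u := by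
  simp only [Matrix.mulVec, dotProduct]
  have h : ∀ w ∈ Finset.univ, M u w * (a * x w - b * y w)
      = a * (M u w * x w) - b * (M u w * y w) := fun w _ => by ring
  rw [Finset.sum_congr rfl h, Finset.sum_sub_distrib, ← Finset.mul_sum, ← Finset.mul_sum]

lemma lap_single (m : ℕ → ℕ) (r : ℕ) (u j : Fin (sig m r)) :
    ((GammaEven r m).lapMatrix ℂ *ᵥ (fun v => if v = j then (1 : ℂ) else 0)) u
      = ((GammaEven r m).degree u : ℂ) * (if u = j then 1 else 0)
        - (if (GammaEven r m).Adj u j then 1 else 0) := by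
  rw [SimpleGraph.lapMatrix_mulVec_apply]
  congr 1
  rw [Finset.sum_ite_eq' ((GammaEven r m).neighborFinset u) j (fun _ => (1 : ℂ))]
  congr 1
  rw [eq_iff_iff]
  exact SimpleGraph.mem_neighborFinset _ _ _

lemma eig_Z (m : ℕ → ℕ) (r : ℕ) {l : ℕ} (hlr : l + 1 ≤ r) (u : Fin (sig m r)) :
    ((GammaEven r m).lapMatrix ℂ *ᵥ
        fun v => (sig m (l + 1) : ℂ) * chi r m l v - (sig m l : ℂ) * chi r m (l + 1) v) u
      = (Tf m r (l + 1) r : ℂ)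
          * ((sig m (l + 1) : ℂ) * chi r m l u - (sig m l : ℂ) * chi r m (l + 1) u) := by
  rw [mulVec_comb, lap_chi m r u (by omega : l ≤ r), lap_chi m r u hlr,
    chi_eq_ite m r u (by omega : l ≤ r), chi_eq_ite m r u hlr]
  set b := blk r m (u : ℕ) with hb
  rcases lt_trichotomy b (l + 1) with hcase | hcase | hcase
  · have hble : b ≤ l := by omega
    rw [if_pos hble, if_pos (by omega : b ≤ l + 1), if_pos hble, if_pos (by omega : b ≤ l + 1)]
    rw [Tf_top m r b l hble, Tf_succ m r b l hlr, Nat.max_eq_right (by omega : b ≤ l + 1),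
      Ef_succ m r l hlr, Tf_top m r (l + 1) (l + 1) le_rfl, Tf_diag m r (l + 1) hlr,
      sig_succ m l]
    by_cases hpar : (l + 1) % 2 = 0
    · simp only [if_pos hpar]; push_cast; ring
    · simp only [if_neg hpar]; push_cast; ring
  · rw [if_neg (by omega : ¬ b ≤ l), if_pos (by omega : b ≤ l + 1),
      if_neg (by omega : ¬ b ≤ l), if_pos (by omega : b ≤ l + 1), hcase]
    rw [Tf_small m r (l + 1) l (by omega) (by omega), Tf_top m r (l + 1) (l + 1) le_rfl,
      Tf_diag m r (l + 1) hlr, sig_succ m l]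
    by_cases hpar : (l + 1) % 2 = 0
    · simp only [if_pos hpar]; push_cast; ring
    · simp only [if_neg hpar]; push_cast; ring
  · rw [if_neg (by omega : ¬ b ≤ l), if_neg (by omega : ¬ b ≤ l + 1),
      if_neg (by omega : ¬ b ≤ l), if_neg (by omega : ¬ b ≤ l + 1)]
    rw [Tf_small m r b l (by omega) (by omega), Tf_small m r b (l + 1) (by omega) hlr]
    by_cases hpar : b % 2 = 0
    · simp only [if_pos hpar]; push_cast; ring
    · simp only [if_neg hpar]; push_cast; ring

lemma eig_U1 (m : ℕ → ℕ) (r : ℕ) (j u : Fin (sig m r)) :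
    ((GammaEven r m).lapMatrix ℂ *ᵥ
        fun v => (sig m (blk r m (j : ℕ)) : ℂ) * (if v = j then 1 else 0)
          - (1 : ℂ) * chi r m (blk r m (j : ℕ)) v) u
      = (Tf m r (blk r m (j : ℕ)) r : ℂ)
          * ((sig m (blk r m (j : ℕ)) : ℂ) * (if u = j then 1 else 0)
            - (1 : ℂ) * chi r m (blk r m (j : ℕ)) u) := by
  have hqr : blk r m (j : ℕ) ≤ r := blk_le r m j.isLt
  rw [mulVec_comb, lap_single m r u j, lap_chi m r u hqr, deg_eq m r u,
    chi_eq_ite m r u hqr]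
  set b := blk r m (u : ℕ) with hbdef
  set q := blk r m (j : ℕ) with hqdef
  by_cases hu : u = j
  · have hbq : b = q := by rw [hbdef, hqdef, hu]
    have hAdj : ¬ (GammaEven r m).Adj u j := by
      rw [hu]; exact SimpleGraph.irrefl _
    rw [if_neg hAdj, if_pos hu, hbq, if_pos (le_refl q)]
    rw [Tf_top m r q q le_rfl, Tf_diag m r q hqr]
    by_cases hpar : q % 2 = 0
    · simp only [if_pos hpar, le_refl, if_true]; push_cast; ring
    · simp only [if_neg hpar, le_refl, if_true]; push_cast; ring
  · have hadj : (GammaEven r m).Adj u j ↔ max b q % 2 = 0 :=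
      ⟨fun h => h.2, fun h => ⟨hu, h⟩⟩
    rw [if_neg hu, if_congr hadj rfl rfl]
    rcases le_or_gt b q with hble | hblt
    · rw [Nat.max_eq_right hble, if_pos hble]
      rw [Tf_top m r b q hble, Tf_top m r q q le_rfl, Tf_diag m r q hqr]
      by_cases hpar : q % 2 = 0
      · simp only [if_pos hpar, if_pos hble]; push_cast; ring
      · simp only [if_neg hpar, if_pos hble]; push_cast; ring
    · rw [Nat.max_eq_left (by omega : q ≤ b), if_neg (by omega : ¬ b ≤ q)]
      rw [Tf_small m r b q (by omega) hqr]
      have hnbq : ¬ b ≤ q := by omega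
      by_cases hpar : b % 2 = 0
      · simp only [if_pos hpar, if_neg hnbq]; push_cast; ring
      · simp only [if_neg hpar, if_neg hnbq]; push_cast; ring

lemma eig_ones (m : ℕ → ℕ) (r : ℕ) :
    (GammaEven r m).lapMatrix ℂ *ᵥ chi r m r = 0 := by
  have h : chi r m r = fun _ => (1 : ℂ) := funext fun v => if_pos v.isLt
  rw [h, SimpleGraph.lapMatrix_mulVec_const_eq_zero]

set_option maxHeartbeats 1000000 in

lemma exp_mulVec_eig {N : ℕ} (A : Matrix (Fin N) (Fin N) ℂ) (v : Fin N → ℂ) (μ : ℂ)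
    (h : A *ᵥ v = μ • v) :
    (NormedSpace.exp A) *ᵥ v = Complex.exp μ • v := by
  letI : SeminormedRing (Matrix (Fin N) (Fin N) ℂ) := Matrix.linftyOpSemiNormedRing
  letI : NormedRing (Matrix (Fin N) (Fin N) ℂ) := Matrix.linftyOpNormedRing
  letI : NormedAlgebra ℂ (Matrix (Fin N) (Fin N) ℂ) := Matrix.linftyOpNormedAlgebra
  have hpow : ∀ k : ℕ, A ^ k *ᵥ v = μ ^ k • v := by
    intro k
    induction k with
    | zero => simp
    | succ k ih =>
      rw [pow_succ, pow_succ, ← Matrix.mulVec_mulVec, h, Matrix.mulVec_smul, ih, smul_smul,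
        mul_comm]
  let g : Matrix (Fin N) (Fin N) ℂ →ₗ[ℂ] (Fin N → ℂ) :=
    { toFun := fun M => M *ᵥ v
      map_add' := fun M M' => Matrix.add_mulVec M M' v
      map_smul' := fun c M => Matrix.smul_mulVec c M v }
  have hg : Continuous g := g.continuous_of_finiteDimensional
  have hsum : Summable (fun k : ℕ => (k.factorial⁻¹ : ℂ) • A ^ k) :=
    NormedSpace.expSeries_summable' A
  have hsum2 : Summable (fun k : ℕ => (k.factorial⁻¹ : ℂ) * μ ^ k) := by
    simpa [smul_eq_mul] using NormedSpace.expSeries_summable' (𝕂 := ℂ) (𝔸 := ℂ) μ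
  have step1 : (NormedSpace.exp A) *ᵥ v = ∑' k : ℕ, g ((k.factorial⁻¹ : ℂ) • A ^ k) := by
    rw [NormedSpace.exp_eq_tsum ℂ]
    exact ((hsum.hasSum.map g hg).tsum_eq).symm
  rw [step1]
  have step2 : ∀ k : ℕ, g ((k.factorial⁻¹ : ℂ) • A ^ k)
      = ((k.factorial⁻¹ : ℂ) * μ ^ k) • v := by
    intro k
    show ((k.factorial⁻¹ : ℂ) • A ^ k) *ᵥ v = _
    rw [Matrix.smul_mulVec, hpow, smul_smul]
  rw [tsum_congr step2, hsum2.tsum_smul_const]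
  congr 1
  rw [Complex.exp_eq_exp_ℂ, NormedSpace.exp_eq_tsum ℂ]
  exact tsum_congr fun k => by rw [smul_eq_mul]


lemma tel_sum {M : Type*} [AddCommGroup M] (f : ℕ → M) {a b : ℕ} (hab : a ≤ b) :
    ∑ l ∈ Finset.Ico a b, (f l - f (l + 1)) = f a - f b := by
  induction b, hab using Nat.le_induction with
  | base => simp
  | succ b hb ih => rw [Finset.sum_Ico_succ_top hb, ih]; abel

lemma mulVec_sumF {N : ℕ} {ι : Type*} (M : Matrix (Fin N) (Fin N) ℂ) (s : Finset ι)
    (x : ι → Fin N → ℂ) :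
    M *ᵥ (∑ l ∈ s, x l) = ∑ l ∈ s, M *ᵥ x l := by
  classical
  induction s using Finset.induction with
  | empty => simp [Matrix.mulVec_zero]
  | insert _ _ h ih => rw [Finset.sum_insert h, Finset.sum_insert h, Matrix.mulVec_add, ih]

lemma abs_exp_unit (t : ℝ) (c : ℕ) :
    ‖Complex.exp (-(Complex.I * (t : ℂ)) * (c : ℂ))‖ = 1 := by
  rw [Complex.norm_exp]
  have : (-(Complex.I * (t : ℂ)) * (c : ℂ)).re = 0 := by
    simp [Complex.mul_re, Complex.mul_im]
  rw [this, Real.exp_zero]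

lemma main_formula (m : ℕ → ℕ) (r : ℕ) (hm1 : 1 ≤ m 1)
    (i j : Fin (sig m r)) (hij : i ≠ j) (hpq : blk r m (i : ℕ) ≤ blk r m (j : ℕ)) (t : ℝ) :
    Ut (GammaEven r m) t i j
      = Complex.exp (-(Complex.I * (t : ℂ)) * (Tf m r (blk r m (j : ℕ)) r : ℂ))
            * (-(sig m (blk r m (j : ℕ)) : ℂ)⁻¹)
        + (∑ l ∈ Finset.Ico (blk r m (j : ℕ)) r,
            Complex.exp (-(Complex.I * (t : ℂ)) * (Tf m r (l + 1) r : ℂ))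
              * ((sig m l : ℂ)⁻¹ - (sig m (l + 1) : ℂ)⁻¹))
        + (sig m r : ℂ)⁻¹ := by
  have hq1 : 1 ≤ blk r m (j : ℕ) := blk_pos r m _
  have hqr : blk r m (j : ℕ) ≤ r := blk_le r m j.isLt
  set q := blk r m (j : ℕ) with hqdef
  have hσ : ∀ l, 1 ≤ l → (sig m l : ℂ) ≠ 0 := by
    intro l hl
    exact Nat.cast_ne_zero.mpr (sig_pos m hm1 hl).ne'
  set L := (GammaEven r m).lapMatrix ℂ with hLdef
  set A := (-(Complex.I * (t : ℂ))) • L with hAdef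
  have hAeig : ∀ (x : Fin (sig m r) → ℂ) (c : ℕ), (L *ᵥ x = (c : ℂ) • x) →
      NormedSpace.exp A *ᵥ x = Complex.exp (-(Complex.I * (t : ℂ)) * (c : ℂ)) • x := by
    intro x c hx
    apply exp_mulVec_eig
    rw [hAdef, Matrix.smul_mulVec, hx, smul_smul]
  -- the three (families of) eigenvectors
  set U1 : Fin (sig m r) → ℂ :=
    fun v => (sig m q : ℂ) * (if v = j then 1 else 0) - 1 * chi r m q v with hU1def
  set Z : ℕ → Fin (sig m r) → ℂ :=
    fun l v => (sig m (l + 1) : ℂ) * chi r m l v - (sig m l : ℂ) * chi r m (l + 1) v with hZdef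
  have e1 : NormedSpace.exp A *ᵥ U1
      = Complex.exp (-(Complex.I * (t : ℂ)) * (Tf m r q r : ℂ)) • U1 := by
    refine hAeig U1 (Tf m r q r) (funext fun u => ?_)
    rw [hU1def]
    rw [show ((GammaEven r m).lapMatrix ℂ *ᵥ fun v =>
      (sig m q : ℂ) * (if v = j then 1 else 0) - 1 * chi r m q v) u
        = (Tf m r q r : ℂ) * ((sig m q : ℂ) * (if u = j then 1 else 0) - 1 * chi r m q u)
      from eig_U1 m r j u]
    simp [Pi.smul_apply, smul_eq_mul]
  have e2 : ∀ l ∈ Finset.Ico q r, NormedSpace.exp A *ᵥ Z l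
      = Complex.exp (-(Complex.I * (t : ℂ)) * (Tf m r (l + 1) r : ℂ)) • Z l := by
    intro l hl
    rw [Finset.mem_Ico] at hl
    refine hAeig (Z l) (Tf m r (l + 1) r) (funext fun u => ?_)
    rw [hZdef]
    rw [show ((GammaEven r m).lapMatrix ℂ *ᵥ fun v =>
      (sig m (l + 1) : ℂ) * chi r m l v - (sig m l : ℂ) * chi r m (l + 1) v) u
        = (Tf m r (l + 1) r : ℂ)
            * ((sig m (l + 1) : ℂ) * chi r m l u - (sig m l : ℂ) * chi r m (l + 1) u)
      from eig_Z m r (by omega) u]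
    simp [Pi.smul_apply, smul_eq_mul]
  have e3 : NormedSpace.exp A *ᵥ chi r m r = Complex.exp 0 • chi r m r := by
    have := hAeig (chi r m r) 0 (by rw [eig_ones]; simp)
    simpa using this
  -- decomposition of the basis vector e_j
  have hdec : (fun v : Fin (sig m r) => if v = j then (1 : ℂ) else 0)
      = (sig m q : ℂ)⁻¹ • U1
        + (∑ l ∈ Finset.Ico q r, ((sig m l : ℂ)⁻¹ * (sig m (l + 1) : ℂ)⁻¹) • Z l)
        + (sig m r : ℂ)⁻¹ • chi r m r := by
    funext v
    simp only [Pi.add_apply, Pi.smul_apply, Finset.sum_apply, smul_eq_mul, hU1def, hZdef]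
    have htel : ∑ l ∈ Finset.Ico q r, ((sig m l : ℂ)⁻¹ * (sig m (l + 1) : ℂ)⁻¹
          * ((sig m (l + 1) : ℂ) * chi r m l v - (sig m l : ℂ) * chi r m (l + 1) v))
        = (sig m q : ℂ)⁻¹ * chi r m q v - (sig m r : ℂ)⁻¹ * chi r m r v := by
      have hterm : ∀ l ∈ Finset.Ico q r, ((sig m l : ℂ)⁻¹ * (sig m (l + 1) : ℂ)⁻¹
            * ((sig m (l + 1) : ℂ) * chi r m l v - (sig m l : ℂ) * chi r m (l + 1) v))
          = (fun l => (sig m l : ℂ)⁻¹ * chi r m l v) l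
            - (fun l => (sig m l : ℂ)⁻¹ * chi r m l v) (l + 1) := by
        intro l hl
        rw [Finset.mem_Ico] at hl
        have h0 := hσ l (by omega)
        have h1 := hσ (l + 1) (by omega)
        field_simp
      rw [Finset.sum_congr rfl hterm, tel_sum _ hqr]
    rw [htel]
    have hchiq : chi r m q v = if v = j then 1 else chi r m q v := by
      split_ifs with hv
      · subst hv
        unfold chi
        rw [if_pos ((blk_le_iff r m v.isLt hqr).mp (le_of_eq hqdef.symm))]
      · rfl
    have hchir : chi r m r v = 1 := if_pos v.isLt
    rw [hchir]
    by_cases hv : v = j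
    · rw [if_pos hv]
      have : chi r m q v = 1 := by
        subst hv
        unfold chi
        exact if_pos ((blk_le_iff r m v.isLt hqr).mp (le_of_eq hqdef.symm))
      rw [this]
      have hq0 := hσ q hq1
      have hr0 := hσ r (le_trans hq1 hqr)
      field_simp
      ring
    · rw [if_neg hv]
      ring
  -- assemble
  have hcol : Ut (GammaEven r m) t i j
      = (NormedSpace.exp A *ᵥ (fun v => if v = j then (1 : ℂ) else 0)) i := by
    have : Ut (GammaEven r m) t = NormedSpace.exp A := rfl
    rw [this]
    simp only [Matrix.mulVec, dotProduct, mul_ite, mul_one, mul_zero]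
    rw [Finset.sum_ite_eq' Finset.univ j (fun w => NormedSpace.exp A i w),
      if_pos (Finset.mem_univ j)]
  rw [hcol, hdec]
  rw [Matrix.mulVec_add, Matrix.mulVec_add, Matrix.mulVec_smul, Matrix.mulVec_smul,
    mulVec_sumF]
  have hmid : ∀ l ∈ Finset.Ico q r,
      (NormedSpace.exp A *ᵥ ((sig m l : ℂ)⁻¹ * (sig m (l + 1) : ℂ)⁻¹) • Z l)
        = ((sig m l : ℂ)⁻¹ * (sig m (l + 1) : ℂ)⁻¹)
            • (Complex.exp (-(Complex.I * (t : ℂ)) * (Tf m r (l + 1) r : ℂ)) • Z l) := by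
    intro l hl
    rw [Matrix.mulVec_smul, e2 l hl]
  rw [Finset.sum_congr rfl hmid, e1, e3]
  -- evaluate at i
  simp only [Pi.add_apply, Pi.smul_apply, Finset.sum_apply, smul_eq_mul, hU1def, hZdef]
  have hiq : (i : ℕ) < sig m q := (blk_le_iff r m i.isLt hqr).mp (le_trans hpq (le_of_eq hqdef.symm))
  have hij' : (if i = j then (1 : ℂ) else 0) = 0 := if_neg hij
  have hchiqi : chi r m q i = 1 := if_pos hiq
  have hchiri : chi r m r i = 1 := if_pos i.isLt
  rw [hij', hchiqi, hchiri, Complex.exp_zero]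
  have hZi : ∀ l ∈ Finset.Ico q r,
      ((sig m l : ℂ)⁻¹ * (sig m (l + 1) : ℂ)⁻¹)
          * (Complex.exp (-(Complex.I * (t : ℂ)) * (Tf m r (l + 1) r : ℂ))
            * ((sig m (l + 1) : ℂ) * chi r m l i - (sig m l : ℂ) * chi r m (l + 1) i))
        = Complex.exp (-(Complex.I * (t : ℂ)) * (Tf m r (l + 1) r : ℂ))
            * ((sig m l : ℂ)⁻¹ - (sig m (l + 1) : ℂ)⁻¹) := by
    intro l hl
    rw [Finset.mem_Ico] at hl
    have hl1 : (i : ℕ) < sig m l := lt_of_lt_of_le hiq (sig_mono m hl.1)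
    have hl2 : (i : ℕ) < sig m (l + 1) := lt_of_lt_of_le hl1 (sig_mono m (by omega))
    have hcl : chi r m l i = 1 := if_pos hl1
    have hcl2 : chi r m (l + 1) i = 1 := if_pos hl2
    rw [hcl, hcl2]
    have h0 := hσ l (by omega)
    have h1 := hσ (l + 1) (by omega)
    field_simp
  rw [Finset.sum_congr rfl hZi]
  have h0 := hσ q (by omega)
  field_simp
  ring

/-- For `G = Γ(m₁,…,m_{2k})`, distinct vertices `i ∈ B_p`, `j ∈ B_q`
with `p ≤ q`, one has `|(U_t)_{i,j}| ≤ 2/σ_q` for all `t`; in particular if `q ≥ 2` then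
`|(U_t)_{i,j}| < 1`. -/
theorem ut_offdiag_entry_bound (k : ℕ) (hk : 1 ≤ k) (m : ℕ → ℕ)
    (hm : ∀ i, 1 ≤ i → i ≤ 2 * k → 1 ≤ m i) (hm1 : 2 ≤ m 1)
    (i j : Fin (sig m (2 * k))) (hij : i ≠ j)
    (p q : ℕ) (hp : blk (2 * k) m (i : ℕ) = p) (hq : blk (2 * k) m (j : ℕ) = q)
    (hpq : p ≤ q) (t : ℝ) :
    ‖Ut (GammaEven (2 * k) m) t i j‖ ≤ 2 / (sig m q : ℝ) ∧
      (2 ≤ q → ‖Ut (GammaEven (2 * k) m) t i j‖ < 1) := by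
  subst hp hq
  have hm1' : 1 ≤ m 1 := by omega
  have hq1 : 1 ≤ blk (2 * k) m (j : ℕ) := blk_pos _ m _
  have hqr : blk (2 * k) m (j : ℕ) ≤ 2 * k := blk_le _ m j.isLt
  have hform := main_formula m (2 * k) hm1' i j hij hpq t
  set q := blk (2 * k) m (j : ℕ) with hqdef
  have hσpos : ∀ l, 1 ≤ l → (0 : ℝ) < (sig m l : ℝ) := fun l hl => by
    exact_mod_cast sig_pos m hm1' hl
  have hq0 : (0 : ℝ) < (sig m q : ℝ) := hσpos q hq1
  have hr0 : (0 : ℝ) < (sig m (2 * k) : ℝ) := hσpos (2 * k) (le_trans hq1 hqr)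
  have hbound : ‖Ut (GammaEven (2 * k) m) t i j‖ ≤ 2 / (sig m q : ℝ) := by
    rw [hform]
    have step1 := norm_add_le
      (Complex.exp (-(Complex.I * (t : ℂ)) * (Tf m (2 * k) q (2 * k) : ℂ))
          * (-(sig m q : ℂ)⁻¹)
        + (∑ l ∈ Finset.Ico q (2 * k),
            Complex.exp (-(Complex.I * (t : ℂ)) * (Tf m (2 * k) (l + 1) (2 * k) : ℂ))
              * ((sig m l : ℂ)⁻¹ - (sig m (l + 1) : ℂ)⁻¹)))
      ((sig m (2 * k) : ℂ)⁻¹)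
    have step2 := norm_add_le
      (Complex.exp (-(Complex.I * (t : ℂ)) * (Tf m (2 * k) q (2 * k) : ℂ))
          * (-(sig m q : ℂ)⁻¹))
      (∑ l ∈ Finset.Ico q (2 * k),
          Complex.exp (-(Complex.I * (t : ℂ)) * (Tf m (2 * k) (l + 1) (2 * k) : ℂ))
            * ((sig m l : ℂ)⁻¹ - (sig m (l + 1) : ℂ)⁻¹))
    have hX : ‖Complex.exp (-(Complex.I * (t : ℂ)) * (Tf m (2 * k) q (2 * k) : ℂ))
        * (-(sig m q : ℂ)⁻¹)‖ = (sig m q : ℝ)⁻¹ := by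
      rw [norm_mul, abs_exp_unit, one_mul, norm_neg, norm_inv, Complex.norm_natCast]
    have hW : ‖(sig m (2 * k) : ℂ)⁻¹‖ = (sig m (2 * k) : ℝ)⁻¹ := by
      rw [norm_inv, Complex.norm_natCast]
    have hY : ‖∑ l ∈ Finset.Ico q (2 * k),
          Complex.exp (-(Complex.I * (t : ℂ)) * (Tf m (2 * k) (l + 1) (2 * k) : ℂ))
            * ((sig m l : ℂ)⁻¹ - (sig m (l + 1) : ℂ)⁻¹)‖
        ≤ (sig m q : ℝ)⁻¹ - (sig m (2 * k) : ℝ)⁻¹ := by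
      refine le_trans (norm_sum_le _ _) ?_
      rw [← tel_sum (fun l => (sig m l : ℝ)⁻¹) hqr]
      refine Finset.sum_le_sum fun l hl => ?_
      rw [Finset.mem_Ico] at hl
      have h0 : (0 : ℝ) < (sig m l : ℝ) := hσpos l (by omega)
      have h1 : (0 : ℝ) < (sig m (l + 1) : ℝ) := hσpos (l + 1) (by omega)
      have hmono : (sig m l : ℝ) ≤ (sig m (l + 1) : ℝ) := by
        exact_mod_cast sig_mono m (by omega : l ≤ l + 1)
      rw [norm_mul, abs_exp_unit, one_mul]
      have hcast : ((sig m l : ℂ)⁻¹ - (sig m (l + 1) : ℂ)⁻¹)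
          = (((sig m l : ℝ)⁻¹ - (sig m (l + 1) : ℝ)⁻¹ : ℝ) : ℂ) := by
        push_cast
        ring
      rw [hcast, Complex.norm_real, Real.norm_eq_abs, abs_of_nonneg (by
        have := one_div_le_one_div_of_le h0 hmono
        simp only [one_div] at this
        linarith)]
    have htot : (sig m q : ℝ)⁻¹ + ((sig m q : ℝ)⁻¹ - (sig m (2 * k) : ℝ)⁻¹)
        + (sig m (2 * k) : ℝ)⁻¹ = 2 / (sig m q : ℝ) := by
      field_simp
      ring
    calc ‖_‖ ≤ _ := step1
    _ ≤ ‖_‖ + ‖_‖ + ‖_‖ := by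
        exact add_le_add_left step2 _
    _ ≤ (sig m q : ℝ)⁻¹ + ((sig m q : ℝ)⁻¹ - (sig m (2 * k) : ℝ)⁻¹)
        + (sig m (2 * k) : ℝ)⁻¹ := by
        rw [hX, hW]
        exact add_le_add_left (add_le_add_right hY _) _
    _ = 2 / (sig m q : ℝ) := htot
  refine ⟨hbound, fun hq2 => ?_⟩
  have hm2 : 1 ≤ m 2 := hm 2 (by omega) (by omega)
  have hs2 : sig m 2 = m 1 + m 2 := by
    have h1 : sig m 1 = sig m 0 + m 1 := sig_succ m 0
    have h2 : sig m 2 = sig m 1 + m 2 := sig_succ m 1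
    rw [h2, h1, sig_zero]
    omega
  have hmono2 : sig m 2 ≤ sig m q := sig_mono m hq2
  have h3 : (3 : ℝ) ≤ (sig m q : ℝ) := by
    exact_mod_cast (by omega : 3 ≤ sig m q)
  refine lt_of_le_of_lt hbound ?_
  rw [div_lt_one hq0]
  linarith
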